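/- arXiv:1503.04626 — 2 statements merged into one kernel-verified Lean document; each statement's English description precedes it below -/
import Mathlib

section
/- Let N ≥ 1 and k ≥ 0 be integers, and let β : (ℤ/Nℤ)² → ℚ satisfy Σ_{x∈(ℤ/Nℤ)²} β(x) = 0. Define ω^k_N(β) : GL₂(ℤ/Nℤ) → ℚ by ω^k_N(β)(g) = Σ_{x=(x₁,x₂)∈(ℤ/Nℤ)²} β(g·ᵗx) · B_{k+2}(x̃₂/N), where ᵗx is the column vector with entries x₁, x₂, x̃₂ ∈ {0,…,N−1} is the representative of x₂, and B_{k+2} is the (k+2)-nd Bernoulli polynomial. Then for every g ∈ GL₂(ℤ/Nℤ), every a ∈ (ℤ/Nℤ)^× and every b ∈ ℤ/Nℤ one has ω^k_N(β)(g·[[a,b],[0,1]]) = (−1)^k · ω^k_N(β)(−g); that is, the horospherical map ω^k_N takes values in the space ℱ^k_N = { f : GL₂(ℤ/Nℤ) → ℚ : f(g·[[a,b],[0,1]]) = (−1)^k f(−g) for all a ∈ (ℤ/Nℤ)^×, b ∈ ℤ/Nℤ }. -/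
open Matrix

/-- The upper-triangular matrix `[[a, b], [0, 1]]` as an element of `GL₂(ℤ/Nℤ)`. -/
noncomputable def upperUnit {N : ℕ} (a : (ZMod N)ˣ) (b : ZMod N) :
    Matrix.GeneralLinearGroup (Fin 2) (ZMod N) where
  val := !![(a : ZMod N), b; 0, 1]
  inv := !![((a⁻¹ : (ZMod N)ˣ) : ZMod N), -(((a⁻¹ : (ZMod N)ˣ) : ZMod N) * b); 0, 1]
  val_inv := by
    ext i j
    fin_cases i <;> fin_cases j <;>
      simp [Matrix.mul_apply, Fin.sum_univ_succ, ← Units.val_mul, mul_comm, mul_left_comm]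
  inv_val := by
    ext i j
    fin_cases i <;> fin_cases j <;>
      simp [Matrix.mul_apply, Fin.sum_univ_succ, ← Units.val_mul, mul_comm, mul_left_comm]

lemma bernoulli_comp_one_sub (n : ℕ) :
    (Polynomial.bernoulli n).comp (1 - Polynomial.X) =
      Polynomial.C ((-1 : ℚ) ^ n) * Polynomial.bernoulli n := by
  induction n with
  | zero => simp [Polynomial.bernoulli_zero]
  | succ n ih =>
    set f := (Polynomial.bernoulli (n+1)).comp (1 - Polynomial.X)
      - Polynomial.C ((-1 : ℚ) ^ (n+1)) * Polynomial.bernoulli (n+1) with hf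
    have hd : Polynomial.derivative f = 0 := by
      rw [hf, Polynomial.derivative_sub, Polynomial.derivative_comp,
        Polynomial.derivative_bernoulli_add_one, Polynomial.derivative_mul,
        Polynomial.derivative_C]
      simp only [Polynomial.derivative_sub, Polynomial.derivative_one, Polynomial.derivative_X,
        Polynomial.mul_comp, Polynomial.natCast_comp, Polynomial.add_comp, Polynomial.one_comp,
        ih, Polynomial.derivative_bernoulli_add_one, pow_succ, _root_.map_mul, _root_.map_neg, _root_.map_one]
      ring
    have hC := Polynomial.eq_C_of_derivative_eq_zero hd
    have h0 : f.coeff 0 = 0 := by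
      have he : f.eval 0 = 0 := by
        rw [hf]
        simp only [Polynomial.eval_sub, Polynomial.eval_comp, Polynomial.eval_mul,
          Polynomial.eval_C, Polynomial.eval_one, Polynomial.eval_X,
          sub_zero, Polynomial.bernoulli_eval_one, Polynomial.bernoulli_eval_zero]
        rw [_root_.bernoulli, ← mul_assoc, ← pow_add]
        rw [Even.neg_one_pow ⟨n+1, by ring⟩, one_mul, sub_self]
      simpa [Polynomial.coeff_zero_eq_eval_zero] using he
    exact sub_eq_zero.mp (by rw [hC, h0, map_zero] : f = 0)

lemma bernoulli_eval_one_sub (n : ℕ) (x : ℚ) :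
    (Polynomial.bernoulli n).eval (1 - x) = (-1) ^ n * (Polynomial.bernoulli n).eval x := by
  have := congrArg (Polynomial.eval x) (bernoulli_comp_one_sub n)
  simpa [Polynomial.eval_comp] using this

lemma bernoulli_eval_val_neg (N : ℕ) [NeZero N] (k : ℕ) (x : ZMod N) :
    (Polynomial.bernoulli (k+2)).eval ((x.val : ℚ) / N)
      = (-1) ^ k * (Polynomial.bernoulli (k+2)).eval (((-x).val : ℚ) / N) := by
  have hN : (N : ℚ) ≠ 0 := Nat.cast_ne_zero.mpr (NeZero.ne N)
  have hpow : ((-1 : ℚ)) ^ (k+2) = (-1) ^ k := by rw [pow_add]; ring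
  rcases eq_or_ne x 0 with rfl | hx
  · have h1 := bernoulli_eval_one_sub (k+2) 1
    rw [sub_self, Polynomial.bernoulli_eval_zero, Polynomial.bernoulli_eval_one,
      ← bernoulli_eq_bernoulli'_of_ne_one (by omega), hpow] at h1
    simp only [neg_zero, ZMod.val_zero, Nat.cast_zero, zero_div,
      Polynomial.bernoulli_eval_zero]
    exact h1
  · have hv : (((-x).val : ℚ)) = N - x.val := by
      rw [ZMod.neg_val, if_neg hx, Nat.cast_sub (le_of_lt (ZMod.val_lt x))]
    have h : ((x.val : ℚ)) / N = 1 - ((-x).val : ℚ) / N := by rw [hv]; field_simp; ring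
    rw [h, bernoulli_eval_one_sub, hpow]

/-- the horospherical map `ω^k_N` lands in the space `𝓕^k_N`, i.e.
`ω^k_N(β)(g·[[a,b],[0,1]]) = (-1)^k · ω^k_N(β)(-g)` for all `g`, `a`, `b`. -/
theorem horospherical_lands_in_FkN
    (N : ℕ) [NeZero N] (k : ℕ)
    (β : (Fin 2 → ZMod N) → ℚ)
    (hβ : ∑ x : Fin 2 → ZMod N, β x = 0)
    (g : Matrix.GeneralLinearGroup (Fin 2) (ZMod N))
    (a : (ZMod N)ˣ) (b : ZMod N) :
    ∑ x : Fin 2 → ZMod N,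
        β ((g * upperUnit a b).1.mulVec x) *
          (Polynomial.bernoulli (k + 2)).eval (((x 1).val : ℚ) / N)
      = (-1) ^ k *
        ∑ x : Fin 2 → ZMod N,
          β ((-g).1.mulVec x) *
            (Polynomial.bernoulli (k + 2)).eval (((x 1).val : ℚ) / N) := by
  set U := upperUnit a b with hU
  -- the equivalence given by multiplication by U
  let e : (Fin 2 → ZMod N) ≃ (Fin 2 → ZMod N) :=
    { toFun := fun x => U.1.mulVec x
      invFun := fun x => U.inv.mulVec x
      left_inv := fun x => by show U.inv.mulVec (U.1.mulVec x) = x; rw [Matrix.mulVec_mulVec, U.inv_val, Matrix.one_mulVec]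
      right_inv := fun x => by show U.1.mulVec (U.inv.mulVec x) = x; rw [Matrix.mulVec_mulVec, U.val_inv, Matrix.one_mulVec] }
  have h2 : ∀ x : Fin 2 → ZMod N, (U.1.mulVec x) 1 = x 1 := by
    intro x
    simp [hU, upperUnit, Matrix.mulVec, dotProduct, Fin.sum_univ_two, Matrix.vecHead, Matrix.vecTail]
  have hL : ∑ x : Fin 2 → ZMod N,
        β ((g * U).1.mulVec x) *
          (Polynomial.bernoulli (k + 2)).eval (((x 1).val : ℚ) / N)
      = ∑ x : Fin 2 → ZMod N,
          β (g.1.mulVec x) *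
            (Polynomial.bernoulli (k + 2)).eval (((x 1).val : ℚ) / N) := by
    rw [← Equiv.sum_comp e (fun x => β (g.1.mulVec x) *
      (Polynomial.bernoulli (k + 2)).eval (((x 1).val : ℚ) / N))]
    refine Finset.sum_congr rfl fun x _ => ?_
    have : (g * U).1.mulVec x = g.1.mulVec (e x) := by
      show (g * U).1.mulVec x = g.1.mulVec (U.1.mulVec x)
      rw [Matrix.mulVec_mulVec, Units.val_mul]
    rw [this, show e x 1 = x 1 from h2 x]
  have hR : ∑ x : Fin 2 → ZMod N,
        β ((-g).1.mulVec x) *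
          (Polynomial.bernoulli (k + 2)).eval (((x 1).val : ℚ) / N)
      = ∑ x : Fin 2 → ZMod N,
          β (g.1.mulVec x) *
            (Polynomial.bernoulli (k + 2)).eval ((((-(x 1)).val : ℚ)) / N) := by
    rw [← Equiv.sum_comp (Equiv.neg (Fin 2 → ZMod N)) (fun x => β ((-g).1.mulVec x) *
      (Polynomial.bernoulli (k + 2)).eval (((x 1).val : ℚ) / N))]
    refine Finset.sum_congr rfl fun x _ => ?_
    have h1 : (-g).1.mulVec (Equiv.neg (Fin 2 → ZMod N) x) = g.1.mulVec x := by
      show (-g).1.mulVec (-x) = g.1.mulVec x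
      rw [Units.val_neg, Matrix.neg_mulVec, Matrix.mulVec_neg, neg_neg]
    rw [h1]
    congr 3
  rw [hL, hR, Finset.mul_sum]
  refine Finset.sum_congr rfl fun x _ => ?_
  rw [bernoulli_eval_val_neg N k (x 1)]
  ring
end

section
/- Let 0 ≤ j ≤ k ≤ ℓ be integers with (k,ℓ) ≠ (j,j), and set k′ = k−j, ℓ′ = ℓ−j. Let N ≥ 1, let χ be a Dirichlet character modulo N, let a₀ ∈ (ℤ/Nℤ)^×, and let τ ∈ ℋ. Then ℰ^{ℓ′+1,k′+1}_{β_χ}(τ, h_{a₀}) = ( (−2πi)^{ℓ−k} π^{k′+1} / ( ℓ′! · Im(τ)^{k′+1} ) ) · Σ_{u∈(ℤ/Nℤ)^×} χ̄(u) F^{(ℓ−k)}_{ũ/N}(τ, k′+1), where ũ ∈ {0,…,N−1} is the representative of u and all series involved converge absolutely. -/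
open Matrix Complex

noncomputable section

/-- The matrix `[[0, -1], [a₀, 0]]` as an element of `GL₂(ℤ/Nℤ)`. -/
def hUnit {N : ℕ} (a₀ : (ZMod N)ˣ) :
    Matrix.GeneralLinearGroup (Fin 2) (ZMod N) where
  val := !![0, -1; (a₀ : ZMod N), 0]
  inv := !![0, ((a₀⁻¹ : (ZMod N)ˣ) : ZMod N); -1, 0]
  val_inv := by
    ext i j
    fin_cases i <;> fin_cases j <;>
      simp [Matrix.mul_apply, Fin.sum_univ_succ, ← Units.val_mul]
  inv_val := by
    ext i j
    fin_cases i <;> fin_cases j <;>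
      simp [Matrix.mul_apply, Fin.sum_univ_succ, ← Units.val_mul]

/-- The divisor `β_χ`, given by `β_χ(v₁,v₂) = χ̄(-v₂)` if `v₁ = 0` and `0` otherwise. -/
def betaChi {N : ℕ} (χ : DirichletCharacter ℂ N) : (Fin 2 → ZMod N) → ℂ :=
  fun v => if v 0 = 0 then (starRingEnd ℂ) (χ (-(v 1))) else 0

/-- The `((c,d),v)`-term of the series `ℰ^{a,b}_β(τ,h)`. -/
def EabTerm (N : ℕ) (β : (Fin 2 → ZMod N) → ℂ)
    (h : Matrix.GeneralLinearGroup (Fin 2) (ZMod N)) (a b : ℕ) (τ : ℂ)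
    (p : ℤ × ℤ) (v : Fin 2 → ZMod N) : ℂ :=
  β ((h⁻¹).1.mulVec v) *
      Complex.exp (2 * Real.pi * Complex.I *
        ((p.1 : ℂ) * ((v 0).val : ℂ) + (p.2 : ℂ) * ((v 1).val : ℂ)) / N) /
    (((p.1 : ℂ) * τ + (p.2 : ℂ)) ^ a * ((p.1 : ℂ) * (starRingEnd ℂ τ) + (p.2 : ℂ)) ^ b)

/-- The series `ℰ^{a,b}_β(τ,h)`. -/
def Eab (N : ℕ) [NeZero N] (β : (Fin 2 → ZMod N) → ℂ)
    (h : Matrix.GeneralLinearGroup (Fin 2) (ZMod N)) (a b : ℕ) (τ : ℂ) : ℂ :=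
  ∑' p : {q : ℤ × ℤ // q ≠ 0}, ∑ v : Fin 2 → ZMod N, EabTerm N β h a b τ p.1 v

/-- The `(m,n)`-term of the series defining `F^{(w)}_α(τ,s)`. -/
def FTerm (w : ℕ) (α : ℝ) (τ : ℂ) (s : ℂ) (p : ℤ × ℤ) : ℂ :=
  Complex.exp (2 * Real.pi * Complex.I * (α : ℂ) * (p.1 : ℂ)) * ((τ.im : ℂ)) ^ s /
    (((p.1 : ℂ) * τ + (p.2 : ℂ)) ^ w *
      ((Complex.normSq ((p.1 : ℂ) * τ + (p.2 : ℂ)) : ℂ)) ^ s)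

/-- The real-analytic Eisenstein series
`F^{(w)}_α(τ,s) = (−2πi)^{−w} π^{−s} Γ(s+w) Σ'_{(m,n)} e^{2πiαm} y^s/((mτ+n)^w |mτ+n|^{2s})`. -/
def F (w : ℕ) (α : ℝ) (τ : ℂ) (s : ℂ) : ℂ :=
  (-(2 * (Real.pi : ℂ) * Complex.I)) ^ (-(w : ℤ)) * (Real.pi : ℂ) ^ (-s) *
    Complex.Gamma (s + (w : ℂ)) * ∑' p : {q : ℤ × ℤ // q ≠ 0}, FTerm w α τ s p.1

end

open Matrix Complex

noncomputable section
namespace EabAux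

lemma zc_ne (τ : UpperHalfPlane) {p : ℤ × ℤ} (hp : p ≠ 0) :
    ((p.1 : ℂ) * (τ : ℂ) + (p.2 : ℂ)) ≠ 0 := by
  have h := UpperHalfPlane.linear_ne_zero (cd := ![(p.1 : ℝ), (p.2 : ℝ)]) τ (fun hcd => ?_)
  · simpa using h
  · apply hp
    have h0 := congrFun hcd 0
    have h1 := congrFun hcd 1
    simp at h0 h1
    exact Prod.ext h0 h1

lemma conj_zc (τ : ℂ) (p : ℤ × ℤ) :
    (p.1 : ℂ) * (starRingEnd ℂ) τ + (p.2 : ℂ) =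
      (starRingEnd ℂ) ((p.1 : ℂ) * τ + (p.2 : ℂ)) := by
  simp [map_add, _root_.map_mul]

lemma summable_core (τ : UpperHalfPlane) {K : ℝ} (hK : 2 < K) :
    Summable (fun p : ℤ × ℤ => ‖(p.1 : ℂ) * (τ : ℂ) + (p.2 : ℂ)‖ ^ (-K)) := by
  have h0 : (0 : ℝ) ≤ K := by linarith
  have h1 := EisensteinSeries.summable_one_div_norm_rpow hK
  have h2 : Summable (fun x : Fin 2 → ℤ =>
      ‖(x 0 : ℂ) * (τ : ℂ) + (x 1 : ℂ)‖ ^ (-K)) :=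
    ((h1.mul_left (EisensteinSeries.r τ ^ (-K))).of_nonneg_of_le
      (fun x => Real.rpow_nonneg (norm_nonneg _) _)
      (fun x => EisensteinSeries.summand_bound τ h0 x))
  have := (finTwoArrowEquiv ℤ).summable_iff
    (f := fun p : ℤ × ℤ => ‖(p.1 : ℂ) * (τ : ℂ) + (p.2 : ℂ)‖ ^ (-K))
  exact this.mp (h2.congr fun x => rfl)

lemma rpow_neg_nat (x : ℝ) (hx : 0 < x) (n : ℕ) : x ^ (-(n : ℝ)) = (x ^ n)⁻¹ := by
  rw [Real.rpow_neg hx.le, Real.rpow_natCast]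

lemma norm_D (τ : ℂ) (p : ℤ × ℤ) (a b : ℕ) :
    ‖((p.1 : ℂ) * τ + (p.2 : ℂ)) ^ a * ((p.1 : ℂ) * (starRingEnd ℂ) τ + (p.2 : ℂ)) ^ b‖ =
      ‖(p.1 : ℂ) * τ + (p.2 : ℂ)‖ ^ (a + b) := by
  rw [conj_zc, norm_mul, norm_pow, norm_pow, RCLike.norm_conj, ← pow_add]

lemma norm_exp_I (r : ℝ) {z : ℂ} (h : z = (r : ℂ) * Complex.I) : ‖Complex.exp z‖ = 1 := by
  rw [h, Complex.norm_exp_ofReal_mul_I]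

/-- inverse matrix application -/
lemma mulVec_hUnit {N : ℕ} (a₀ : (ZMod N)ˣ) (v : Fin 2 → ZMod N) :
    ((hUnit a₀)⁻¹).1.mulVec v = ![((a₀⁻¹ : (ZMod N)ˣ) : ZMod N) * v 1, -(v 0)] := by
  show (!![0, ((a₀⁻¹ : (ZMod N)ˣ) : ZMod N); -1, 0]).mulVec v = _
  funext i
  fin_cases i <;> simp [Matrix.mulVec, dotProduct, Fin.sum_univ_succ]

lemma betaChi_mulVec {N : ℕ} (χ : DirichletCharacter ℂ N) (a₀ : (ZMod N)ˣ)
    (v : Fin 2 → ZMod N) :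
    betaChi χ (((hUnit a₀)⁻¹).1.mulVec v) =
      if v 1 = 0 then (starRingEnd ℂ) (χ (v 0)) else 0 := by
  rw [mulVec_hUnit, betaChi]
  simp [Units.mul_right_eq_zero]

lemma sum_zmod_units {N : ℕ} [NeZero N] (χ : DirichletCharacter ℂ N) (g : ZMod N → ℂ) :
    ∑ u : (ZMod N)ˣ, (starRingEnd ℂ) (χ (u : ZMod N)) * g (u : ZMod N)
      = ∑ x : ZMod N, (starRingEnd ℂ) (χ x) * g x := by
  have h := Finset.sum_image (s := (Finset.univ : Finset (ZMod N)ˣ))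
    (f := fun x => (starRingEnd ℂ) (χ x) * g x) (g := fun u => (u : ZMod N))
    (fun u _ u' _ h => Units.ext h)
  rw [← h]
  refine Finset.sum_subset (Finset.subset_univ _) fun x _ hx => ?_
  have hu : ¬ IsUnit x := fun h => hx (Finset.mem_image.mpr ⟨h.unit, Finset.mem_univ _, rfl⟩)
  rw [χ.map_nonunit hu, map_zero, zero_mul]

end EabAux
end

noncomputable section
namespace EabAux

lemma EabTerm_norm_le {N : ℕ} [NeZero N] (χ : DirichletCharacter ℂ N) (a₀ : (ZMod N)ˣ)
    (a b : ℕ) (τ : UpperHalfPlane) {p : ℤ × ℤ} (hp : p ≠ 0) (v : Fin 2 → ZMod N) :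
    ‖EabTerm N (betaChi χ) (hUnit a₀) a b (τ : ℂ) p v‖ ≤
      ‖(p.1 : ℂ) * (τ : ℂ) + (p.2 : ℂ)‖ ^ (-((a + b : ℕ) : ℝ)) := by
  have hz := zc_ne τ hp
  have hzpos : 0 < ‖(p.1 : ℂ) * (τ : ℂ) + (p.2 : ℂ)‖ :=
    norm_pos_iff.mpr hz
  rw [rpow_neg_nat _ hzpos, EabTerm, norm_div, norm_mul, norm_D]
  have hexp : ‖Complex.exp (2 * Real.pi * Complex.I *
      ((p.1 : ℂ) * (((v 0).val : ℕ) : ℂ) + (p.2 : ℂ) * (((v 1).val : ℕ) : ℂ)) / N)‖ = 1 := by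
    apply norm_exp_I ((2 * Real.pi * ((p.1 : ℝ) * ((v 0).val : ℕ) +
      (p.2 : ℝ) * ((v 1).val : ℕ)) / N : ℝ))
    push_cast
    ring
  rw [hexp, mul_one]
  rw [div_le_iff₀ (by positivity), inv_mul_cancel₀ (by positivity)]
  rw [betaChi_mulVec]
  split
  · rw [RCLike.norm_conj]
    exact χ.norm_le_one _
  · simp

lemma FTerm_natCast (w m : ℕ) (α : ℝ) (τ : ℂ) (p : ℤ × ℤ) :
    FTerm w α τ ((m : ℕ) : ℂ) p =
      Complex.exp (2 * Real.pi * Complex.I * (α : ℂ) * (p.1 : ℂ)) * ((τ.im : ℂ)) ^ m /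
        (((p.1 : ℂ) * τ + (p.2 : ℂ)) ^ w *
          ((Complex.normSq ((p.1 : ℂ) * τ + (p.2 : ℂ)) : ℂ)) ^ m) := by
  simp [FTerm, Complex.cpow_natCast]

lemma FTerm_norm (w m : ℕ) (α : ℝ) (τ : UpperHalfPlane) {p : ℤ × ℤ} (hp : p ≠ 0) :
    ‖FTerm w α (τ : ℂ) ((m : ℕ) : ℂ) p‖ =
      (τ : ℂ).im ^ m * ‖(p.1 : ℂ) * (τ : ℂ) + (p.2 : ℂ)‖ ^ (-((w + 2 * m : ℕ) : ℝ)) := by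
  have hz := zc_ne τ hp
  have hzpos : 0 < ‖(p.1 : ℂ) * (τ : ℂ) + (p.2 : ℂ)‖ := norm_pos_iff.mpr hz
  have him : (0 : ℝ) < (τ : ℂ).im := τ.2
  rw [rpow_neg_nat _ hzpos, FTerm_natCast, norm_div, norm_mul]
  have hexp : ‖Complex.exp (2 * Real.pi * Complex.I * (α : ℂ) * (p.1 : ℂ))‖ = 1 := by
    apply norm_exp_I ((2 * Real.pi * α * (p.1 : ℝ) : ℝ))
    push_cast
    ring
  rw [hexp, one_mul, norm_mul, norm_pow, norm_pow, norm_pow]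
  have h1 : ‖((τ : ℂ).im : ℂ)‖ = (τ : ℂ).im := by
    rw [Complex.norm_real, Real.norm_of_nonneg him.le]
  have h2 : ‖((Complex.normSq ((p.1 : ℂ) * (τ : ℂ) + (p.2 : ℂ)) : ℝ) : ℂ)‖ =
      ‖(p.1 : ℂ) * (τ : ℂ) + (p.2 : ℂ)‖ ^ 2 := by
    rw [Complex.norm_real, Real.norm_of_nonneg (Complex.normSq_nonneg _),
      Complex.normSq_eq_norm_sq]
  rw [h1, h2, ← pow_mul, ← pow_add]
  rw [mul_comm 2 m, div_eq_mul_inv]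

end EabAux
end

noncomputable section
namespace EabAux

lemma inner_sum {N : ℕ} [NeZero N] (χ : DirichletCharacter ℂ N) (a₀ : (ZMod N)ˣ)
    (a b : ℕ) (τ : ℂ) (p : ℤ × ℤ) :
    ∑ v : Fin 2 → ZMod N, EabTerm N (betaChi χ) (hUnit a₀) a b τ p v =
      ∑ u : (ZMod N)ˣ, (starRingEnd ℂ) (χ (u : ZMod N)) *
        (Complex.exp (2 * Real.pi * Complex.I *
            ((p.1 : ℂ) * (((u : ZMod N).val : ℕ) : ℂ)) / N) /
          (((p.1 : ℂ) * τ + (p.2 : ℂ)) ^ a *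
            ((p.1 : ℂ) * (starRingEnd ℂ) τ + (p.2 : ℂ)) ^ b)) := by
  rw [sum_zmod_units χ (fun x => Complex.exp (2 * Real.pi * Complex.I *
      ((p.1 : ℂ) * ((x.val : ℕ) : ℂ)) / N) /
      (((p.1 : ℂ) * τ + (p.2 : ℂ)) ^ a *
        ((p.1 : ℂ) * (starRingEnd ℂ) τ + (p.2 : ℂ)) ^ b))]
  rw [← Equiv.sum_comp (finTwoArrowEquiv (ZMod N)).symm
      (fun v => EabTerm N (betaChi χ) (hUnit a₀) a b τ p v), Fintype.sum_prod_type]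
  refine Finset.sum_congr rfl fun x _ => ?_
  have hbeta : ∀ v : Fin 2 → ZMod N,
      betaChi χ (((hUnit a₀ : Matrix (Fin 2) (Fin 2) (ZMod N)))⁻¹ *ᵥ v) =
        if v 1 = 0 then (starRingEnd ℂ) (χ (v 0)) else 0 := by
    intro v
    rw [← Matrix.coe_units_inv]
    exact betaChi_mulVec χ a₀ v
  rw [Finset.sum_eq_single (0 : ZMod N)]
  · simp only [EabTerm, betaChi_mulVec]
    simp [mul_div_assoc]
  · intro y _ hy
    simp only [EabTerm, betaChi_mulVec]
    simp [hy]
  · intro h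
    exact absurd (Finset.mem_univ _) h

end EabAux
end

noncomputable section
namespace EabAux

lemma C_mul_F (k ℓ j : ℕ) (hjk : j ≤ k) (hkl : k ≤ ℓ) (τ : UpperHalfPlane) (α : ℝ) :
    (-(2 * (Real.pi : ℂ) * Complex.I)) ^ (ℓ - k) * (Real.pi : ℂ) ^ (k - j + 1) /
        (((ℓ - j).factorial : ℂ) * (((τ : ℂ).im : ℝ) : ℂ) ^ (k - j + 1)) *
      F (ℓ - k) α (τ : ℂ) ((k - j + 1 : ℕ) : ℂ) =
    ∑' p : {q : ℤ × ℤ // q ≠ 0},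
      Complex.exp (2 * Real.pi * Complex.I * (α : ℂ) * (p.1.1 : ℂ)) /
        (((p.1.1 : ℂ) * (τ : ℂ) + (p.1.2 : ℂ)) ^ (ℓ - j + 1) *
          ((p.1.1 : ℂ) * (starRingEnd ℂ) (τ : ℂ) + (p.1.2 : ℂ)) ^ (k - j + 1)) := by
  set w := ℓ - k with hw
  set m := k - j + 1 with hm
  set L := ℓ - j with hL
  have e1 : w + m = L + 1 := by omega
  have hA : (-(2 * (Real.pi : ℂ) * Complex.I)) ^ w ≠ 0 :=
    pow_ne_zero _ (by simp [Real.pi_ne_zero, Complex.I_ne_zero])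
  have hpi : (Real.pi : ℂ) ^ m ≠ 0 :=
    pow_ne_zero _ (by exact_mod_cast Real.pi_ne_zero)
  have hLf : ((L.factorial : ℕ) : ℂ) ≠ 0 := by exact_mod_cast L.factorial_ne_zero
  have him : (0 : ℝ) < (τ : ℂ).im := τ.2
  have hym : (((τ : ℂ).im : ℝ) : ℂ) ^ m ≠ 0 :=
    pow_ne_zero _ (by exact_mod_cast him.ne')
  rw [F]
  have hP1 : (-(2 * (Real.pi : ℂ) * Complex.I)) ^ (-(w : ℤ)) =
      ((-(2 * (Real.pi : ℂ) * Complex.I)) ^ w)⁻¹ := by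
    rw [_root_.zpow_neg, zpow_natCast]
  have hP2 : (Real.pi : ℂ) ^ (-((m : ℕ) : ℂ)) = ((Real.pi : ℂ) ^ m)⁻¹ := by
    rw [Complex.cpow_neg, Complex.cpow_natCast]
  have hP3 : Complex.Gamma (((m : ℕ) : ℂ) + ((w : ℕ) : ℂ)) = (L.factorial : ℂ) := by
    have h2 : m + w = L + 1 := by omega
    have harg : ((m : ℕ) : ℂ) + ((w : ℕ) : ℂ) = ((L : ℕ) : ℂ) + 1 :=
      calc ((m : ℕ) : ℂ) + ((w : ℕ) : ℂ) = ((m + w : ℕ) : ℂ) := by push_cast; ring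
        _ = ((L + 1 : ℕ) : ℂ) := by rw [h2]
        _ = ((L : ℕ) : ℂ) + 1 := by push_cast; ring
    rw [harg, Complex.Gamma_nat_eq_factorial]
  rw [hP1, hP2, hP3]
  have hconst : ∀ (A P Lf ym t : ℂ), A ≠ 0 → P ≠ 0 → Lf ≠ 0 → ym ≠ 0 →
      A * P / (Lf * ym) * (A⁻¹ * P⁻¹ * Lf * t) = ym⁻¹ * t := by
    intro A P Lf ym t hA hP hLf hym
    field_simp
  rw [hconst _ _ _ _ _ hA hpi hLf hym, ← tsum_mul_left]
  refine tsum_congr fun p => ?_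
  have hz := zc_ne τ p.2
  have hcz : ((p.1.1 : ℂ) * (starRingEnd ℂ) (τ : ℂ) + (p.1.2 : ℂ)) ≠ 0 := by
    rw [conj_zc, starRingEnd_apply]
    exact star_ne_zero.mpr hz
  rw [FTerm_natCast, conj_zc]
  have hnsq : ((Complex.normSq ((p.1.1 : ℂ) * (τ : ℂ) + (p.1.2 : ℂ)) : ℝ) : ℂ) =
      ((p.1.1 : ℂ) * (τ : ℂ) + (p.1.2 : ℂ)) *
        (starRingEnd ℂ) ((p.1.1 : ℂ) * (τ : ℂ) + (p.1.2 : ℂ)) := by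
    rw [Complex.mul_conj]
  rw [hnsq]
  have hpow : ((p.1.1 : ℂ) * (τ : ℂ) + (p.1.2 : ℂ)) ^ w *
      (((p.1.1 : ℂ) * (τ : ℂ) + (p.1.2 : ℂ)) *
        (starRingEnd ℂ) ((p.1.1 : ℂ) * (τ : ℂ) + (p.1.2 : ℂ))) ^ m =
      ((p.1.1 : ℂ) * (τ : ℂ) + (p.1.2 : ℂ)) ^ (L + 1) *
        ((starRingEnd ℂ) ((p.1.1 : ℂ) * (τ : ℂ) + (p.1.2 : ℂ))) ^ m := by
    rw [mul_pow, ← mul_assoc, ← pow_add, e1]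
  rw [hpow]
  have halg : ∀ (E D : ℂ), ((((τ : ℂ).im : ℝ) : ℂ) ^ m)⁻¹ * (E * (((τ : ℂ).im : ℝ) : ℂ) ^ m / D)
      = E / D := by
    intro E D
    rw [div_eq_mul_inv, div_eq_mul_inv,
      show ((((τ : ℂ).im : ℝ) : ℂ) ^ m)⁻¹ * (E * (((τ : ℂ).im : ℝ) : ℂ) ^ m * D⁻¹) =
        ((((τ : ℂ).im : ℝ) : ℂ) ^ m)⁻¹ * (((τ : ℂ).im : ℝ) : ℂ) ^ m * (E * D⁻¹) from by ring,
      inv_mul_cancel₀ hym, one_mul]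
  exact halg _ _

end EabAux
end

open EabAux in
/-- `ℰ^{ℓ′+1,k′+1}_{β_χ}(τ, h_{a₀}) = ((−2πi)^{ℓ−k} π^{k′+1} / (ℓ′! · Im(τ)^{k′+1})) ·
  Σ_{u∈(ℤ/Nℤ)ˣ} χ̄(u) F^{(ℓ−k)}_{ũ/N}(τ, k′+1)`, all series converging absolutely. -/
theorem Eab_eq_sum_F
    (k ℓ j : ℕ) (hjk : j ≤ k) (hkl : k ≤ ℓ) (hne : (k, ℓ) ≠ (j, j))
    (N : ℕ) [NeZero N] (χ : DirichletCharacter ℂ N)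
    (a₀ : (ZMod N)ˣ) (τ : UpperHalfPlane) :
    Summable (fun p : {q : ℤ × ℤ // q ≠ 0} × (Fin 2 → ZMod N) =>
        ‖EabTerm N (betaChi χ) (hUnit a₀) (ℓ - j + 1) (k - j + 1) (τ : ℂ) p.1.1 p.2‖) ∧
    (∀ u : (ZMod N)ˣ, Summable (fun p : {q : ℤ × ℤ // q ≠ 0} =>
        ‖FTerm (ℓ - k) (((u : ZMod N).val : ℝ) / N) (τ : ℂ) ((k - j + 1 : ℕ) : ℂ) p.1‖)) ∧
    Eab N (betaChi χ) (hUnit a₀) (ℓ - j + 1) (k - j + 1) (τ : ℂ)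
      = (-(2 * (Real.pi : ℂ) * Complex.I)) ^ (ℓ - k) * (Real.pi : ℂ) ^ (k - j + 1) /
          (((ℓ - j).factorial : ℂ) * ((τ.im : ℝ) : ℂ) ^ (k - j + 1)) *
        ∑ u : (ZMod N)ˣ,
          (starRingEnd ℂ) (χ u) *
            F (ℓ - k) (((u : ZMod N).val : ℝ) / N) (τ : ℂ) ((k - j + 1 : ℕ) : ℂ) := by
  have hne' : ¬(k = j ∧ ℓ = j) := by
    intro h
    exact hne (by rw [h.1, h.2])
  -- the big summability
  have hK3 : 3 ≤ (ℓ - j + 1) + (k - j + 1) := by omega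
  have hK : (2 : ℝ) < (((ℓ - j + 1) + (k - j + 1) : ℕ) : ℝ) := by exact_mod_cast by omega
  have S0 : Summable (fun p : {q : ℤ × ℤ // q ≠ 0} =>
      ‖(p.1.1 : ℂ) * (τ : ℂ) + (p.1.2 : ℂ)‖ ^
        (-(((ℓ - j + 1) + (k - j + 1) : ℕ) : ℝ))) :=
    (summable_core τ hK).subtype {q : ℤ × ℤ | q ≠ 0}
  have Sbig : Summable (fun p : {q : ℤ × ℤ // q ≠ 0} × (Fin 2 → ZMod N) =>
      ‖EabTerm N (betaChi χ) (hUnit a₀) (ℓ - j + 1) (k - j + 1) (τ : ℂ) p.1.1 p.2‖) := by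
    apply (summable_prod_of_nonneg (fun p => norm_nonneg _)).mpr
    refine ⟨fun p => Summable.of_finite, ?_⟩
    apply Summable.of_nonneg_of_le (fun p => tsum_nonneg fun v => norm_nonneg _)
      ?_ (S0.mul_left ((Fintype.card (Fin 2 → ZMod N) : ℝ)))
    intro p
    rw [tsum_fintype]
    calc ∑ v : Fin 2 → ZMod N,
          ‖EabTerm N (betaChi χ) (hUnit a₀) (ℓ - j + 1) (k - j + 1) (τ : ℂ) p.1 v‖
        ≤ ∑ _v : Fin 2 → ZMod N,
            ‖(p.1.1 : ℂ) * (τ : ℂ) + (p.1.2 : ℂ)‖ ^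
              (-(((ℓ - j + 1) + (k - j + 1) : ℕ) : ℝ)) :=
          Finset.sum_le_sum fun v _ => EabTerm_norm_le χ a₀ _ _ τ p.2 v
      _ = ((Fintype.card (Fin 2 → ZMod N) : ℝ)) *
            ‖(p.1.1 : ℂ) * (τ : ℂ) + (p.1.2 : ℂ)‖ ^
              (-(((ℓ - j + 1) + (k - j + 1) : ℕ) : ℝ)) := by
          rw [Finset.sum_const, nsmul_eq_mul, Finset.card_univ]
  refine ⟨Sbig, ?_, ?_⟩
  -- F summability
  · intro u
    have hK2 : (2 : ℝ) < (((ℓ - k) + 2 * (k - j + 1) : ℕ) : ℝ) := by exact_mod_cast by omega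
    have S1 : Summable (fun p : {q : ℤ × ℤ // q ≠ 0} =>
        (τ : ℂ).im ^ (k - j + 1) *
          ‖(p.1.1 : ℂ) * (τ : ℂ) + (p.1.2 : ℂ)‖ ^
            (-(((ℓ - k) + 2 * (k - j + 1) : ℕ) : ℝ))) :=
      (((summable_core τ hK2).subtype {q : ℤ × ℤ | q ≠ 0}).mul_left _)
    exact S1.congr fun p => (FTerm_norm (ℓ - k) (k - j + 1) _ τ p.2).symm
  -- the identity
  · rw [Eab]
    rw [tsum_congr (fun p : {q : ℤ × ℤ // q ≠ 0} =>
      inner_sum χ a₀ (ℓ - j + 1) (k - j + 1) (τ : ℂ) p.1)]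
    have hsummand : ∀ u : (ZMod N)ˣ, Summable (fun p : {q : ℤ × ℤ // q ≠ 0} =>
        (starRingEnd ℂ) (χ (u : ZMod N)) *
          (Complex.exp (2 * Real.pi * Complex.I *
              ((p.1.1 : ℂ) * (((u : ZMod N).val : ℕ) : ℂ)) / N) /
            (((p.1.1 : ℂ) * (τ : ℂ) + (p.1.2 : ℂ)) ^ (ℓ - j + 1) *
              ((p.1.1 : ℂ) * (starRingEnd ℂ) (τ : ℂ) + (p.1.2 : ℂ)) ^ (k - j + 1)))) := by
      intro u
      apply Summable.of_norm
      apply Summable.of_nonneg_of_le (fun p => norm_nonneg _) ?_ S0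
      intro p
      have hzpos : 0 < ‖(p.1.1 : ℂ) * (τ : ℂ) + (p.1.2 : ℂ)‖ :=
        norm_pos_iff.mpr (zc_ne τ p.2)
      rw [norm_mul, norm_div, norm_D, RCLike.norm_conj, DirichletCharacter.unit_norm_eq_one,
        one_mul, rpow_neg_nat _ hzpos]
      rw [norm_exp_I ((2 * Real.pi * ((p.1.1 : ℝ) * ((u : ZMod N).val : ℕ)) / N : ℝ))
        (by push_cast; ring)]
      rw [one_div]
    rw [Summable.tsum_finsetSum (fun u _ => hsummand u), Finset.mul_sum]
    refine Finset.sum_congr rfl fun u _ => ?_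
    rw [tsum_mul_left]
    have hcf := C_mul_F k ℓ j hjk hkl τ (((u : ZMod N).val : ℝ) / N)
    rw [UpperHalfPlane.coe_im] at hcf
    rw [mul_left_comm]
    congr 1
    rw [hcf]
    refine tsum_congr fun p => ?_
    congr 2
    push_cast
    ring
end
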